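/- Let R be a subring of a commutative ring T with a common ideal C containing a T-regular element, with T flat over R and C principal over T. If I is an ideal of R with IT = T, then Hom_R(I, R)/(C·Hom_R(I, R)) ≅ Hom_{R/C}(I/CI, R/C) as R/C-modules. -/

import Mathlib

set_option synthInstance.maxHeartbeats 1000000
set_option maxHeartbeats 2000000

/-- condition (FP); `I` an ideal of `R` with `IT = T`.  Then
`Hom_R(I,R)/(C·Hom_R(I,R)) ≅ Hom_{R/C}(I/CI, R/C)`; since both sides are killed by
`C`, an `R`-linear equivalence is the same as an `R/C`-linear one. -/
theorem stmt_8 (T : Type*) [CommRing T] (R : Subring T) (C : Ideal T)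
    (hCR : (C : Set T) ⊆ (R : Set T))
    (hreg : ∃ c ∈ C, c ∈ nonZeroDivisors T)
    (hflat : Module.Flat ↥R T) (hprin : C.IsPrincipal)
    (I : Ideal ↥R) (hIT : Ideal.map (algebraMap ↥R T) I = ⊤) :
    Nonempty
      (((I →ₗ[↥R] ↥R) ⧸
          ((Ideal.comap (algebraMap ↥R T) C) •
            (⊤ : Submodule ↥R (I →ₗ[↥R] ↥R)))) ≃ₗ[↥R]
        ((I ⧸ ((Ideal.comap (algebraMap ↥R T) C) • (⊤ : Submodule ↥R I))) →ₗ[↥R]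
          (↥R ⧸ Ideal.comap (algebraMap ↥R T) C))) := by
  classical
  set J : Ideal ↥R := Ideal.comap (algebraMap ↥R T) C with hJdef
  have hmemJ : ∀ r : ↥R, r ∈ J ↔ (r : T) ∈ C := fun r => Iff.rfl
  -- representation of 1
  have h1 : (1 : T) ∈ Ideal.map (algebraMap ↥R T) I := by rw [hIT]; trivial
  rw [Ideal.map, Ideal.span, Finsupp.mem_span_image_iff_linearCombination] at h1
  obtain ⟨l, hls, hl1⟩ := h1
  rw [Finsupp.mem_supported] at hls
  rw [Finsupp.linearCombination_apply, Finsupp.sum] at hl1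
  have hsum : ∑ a ∈ l.support, l a * (a : T) = 1 := by
    have h1' := hl1
    simp [smul_eq_mul] at h1'
    exact h1'
  set e : ↥R → I := fun a => if h : a ∈ I then ⟨a, h⟩ else 0 with he
  have he_val : ∀ a ∈ l.support, ((e a : ↥R) : T) = (a : T) := by
    intro a ha
    have h : a ∈ I := hls ha
    simp [he, h]
  have hcomm : ∀ a ∈ l.support, ∀ x : I, ((x : ↥R)) • e a = a • x := by
    intro a ha x
    have h : a ∈ I := hls ha
    apply Subtype.ext
    show ((x : ↥R)) * ((e a : ↥R)) = a * (x : ↥R)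
    have : ((e a : ↥R)) = a := by simp [he, h]
    rw [this, mul_comm]
  -- the natural map
  have hle : ∀ f : I →ₗ[↥R] ↥R,
      (J • (⊤ : Submodule ↥R I)) ≤ Submodule.comap f (J : Submodule ↥R ↥R) := by
    intro f
    rw [Submodule.smul_le]
    intro r hr n _
    simp only [Submodule.mem_comap, map_smul, smul_eq_mul]
    exact J.mul_mem_right _ hr
  let Phi : (I →ₗ[↥R] ↥R) →ₗ[↥R]
      ((I ⧸ (J • (⊤ : Submodule ↥R I))) →ₗ[↥R] (↥R ⧸ J)) :=
    { toFun := fun f => Submodule.mapQ _ _ f (hle f)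
      map_add' := by
        intro f g
        refine LinearMap.ext fun xq => ?_
        obtain ⟨x, rfl⟩ := Submodule.Quotient.mk_surjective _ xq
        simp [Submodule.mapQ_apply]
      map_smul' := by
        intro c f
        refine LinearMap.ext fun xq => ?_
        obtain ⟨x, rfl⟩ := Submodule.Quotient.mk_surjective _ xq
        simp only [Submodule.mapQ_apply, LinearMap.smul_apply, RingHom.id_apply]
        rw [← Submodule.Quotient.mk_smul] }
  have hPhi : ∀ (f : I →ₗ[↥R] ↥R) (x : I),
      Phi f (Submodule.Quotient.mk x) = Submodule.Quotient.mk (f x) := by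
    intro f x
    simp [Phi, Submodule.mapQ_apply]
  have hker : LinearMap.ker Phi = J • (⊤ : Submodule ↥R (I →ₗ[↥R] ↥R)) := by
    apply le_antisymm
    · intro f hf
      replace hf : Phi f = 0 := hf
      have hfC : ∀ x : I, ((f x : ↥R) : T) ∈ C := by
        intro x
        have h0 : Phi f (Submodule.Quotient.mk x) = 0 := by rw [hf]; rfl
        rw [hPhi, Submodule.Quotient.mk_eq_zero] at h0
        exact (hmemJ _).mp h0
      set u : T := ∑ a ∈ l.support, l a * ((f (e a) : ↥R) : T) with hu
      have huC : u ∈ C := Ideal.sum_mem _ fun a _ => C.mul_mem_left _ (hfC (e a))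
      set u' : ↥R := ⟨u, hCR huC⟩ with hu'
      have hkey : ∀ x : I, ((f x : ↥R) : T) = u * ((x : ↥R) : T) := by
        intro x
        have hterm : ∀ a ∈ l.support,
            l a * ((f (e a) : ↥R) : T) * ((x : ↥R) : T)
              = l a * ((a : T) * ((f x : ↥R) : T)) := by
          intro a ha
          have h2 : ((x : ↥R)) • f (e a) = a • f x := by
            rw [← map_smul, ← map_smul, hcomm a ha x]
          have h3 := congrArg (fun y : ↥R => (y : T)) h2
          push_cast [smul_eq_mul] at h3
          rw [mul_assoc, mul_comm ((f (e a) : ↥R) : T), h3]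
        refine Eq.symm ?_
        calc u * ((x : ↥R) : T)
            = ∑ a ∈ l.support, l a * ((f (e a) : ↥R) : T) * ((x : ↥R) : T) := by
              rw [hu, Finset.sum_mul]
          _ = ∑ a ∈ l.support, l a * ((a : T) * ((f x : ↥R) : T)) :=
              Finset.sum_congr rfl hterm
          _ = (∑ a ∈ l.support, l a * (a : T)) * ((f x : ↥R) : T) := by
              rw [Finset.sum_mul]
              exact Finset.sum_congr rfl fun a _ => by ring
          _ = ((f x : ↥R) : T) := by rw [hsum, one_mul]
      have hfeq : f = u' • (Submodule.subtype I) := by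
        refine LinearMap.ext fun x => ?_
        apply Subtype.ext
        show ((f x : ↥R) : T) = ((u' • (x : ↥R) : ↥R) : T)
        rw [hkey x, smul_eq_mul]
        push_cast
        rfl
      have hu'J : u' ∈ J := (hmemJ u').mpr huC
      exact hfeq ▸ Submodule.smul_mem_smul hu'J Submodule.mem_top
    · rw [Submodule.smul_le]
      intro r hr f _
      rw [LinearMap.mem_ker]
      refine LinearMap.ext fun xq => ?_
      obtain ⟨x, rfl⟩ := Submodule.Quotient.mk_surjective _ xq
      rw [hPhi]
      rw [LinearMap.zero_apply, Submodule.Quotient.mk_eq_zero]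
      have : (r • f) x = r • f x := rfl
      rw [this, smul_eq_mul]
      exact J.mul_mem_right _ hr
  have hsurj : Function.Surjective Phi := by
    intro g
    set g' : I →ₗ[↥R] (↥R ⧸ J) := g ∘ₗ (J • (⊤ : Submodule ↥R I)).mkQ with hg'
    have hlift : ∀ y : ↥R ⧸ J, ∃ r : ↥R, (Submodule.Quotient.mk r : ↥R ⧸ J) = y :=
      fun y => Submodule.Quotient.mk_surjective _ y
    choose rho hrho using hlift
    set u : T := ∑ a ∈ l.support, l a * ((rho (g' (e a)) : ↥R) : T) with hu
    have hclaim : ∀ x : I, u * ((x : ↥R) : T) - ((rho (g' x) : ↥R) : T) ∈ C := by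
      intro x
      have hterm : ∀ a ∈ l.support,
          ((rho (g' (e a)) : ↥R) : T) * ((x : ↥R) : T)
            - (a : T) * ((rho (g' x) : ↥R) : T) ∈ C := by
        intro a ha
        have hR : (rho (g' (e a))) * ((x : ↥R)) - a * (rho (g' x)) ∈ J := by
          rw [← Submodule.Quotient.eq]
          have e1 : (Submodule.Quotient.mk (rho (g' (e a)) * (x : ↥R)) : ↥R ⧸ J)
              = ((x : ↥R)) • Submodule.Quotient.mk (rho (g' (e a))) := by
            rw [← Submodule.Quotient.mk_smul, smul_eq_mul, mul_comm]
          have e2 : (Submodule.Quotient.mk (a * rho (g' x)) : ↥R ⧸ J)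
              = a • Submodule.Quotient.mk (rho (g' x)) := by
            rw [← Submodule.Quotient.mk_smul, smul_eq_mul]
          rw [e1, e2, hrho, hrho, ← map_smul, ← map_smul, hcomm a ha x]
        have := (hmemJ _).mp hR
        push_cast at this
        exact this
      have heq : u * ((x : ↥R) : T) - ((rho (g' x) : ↥R) : T)
          = ∑ a ∈ l.support, l a * (((rho (g' (e a)) : ↥R) : T) * ((x : ↥R) : T)
              - (a : T) * ((rho (g' x) : ↥R) : T)) := by
        simp only [mul_sub, Finset.sum_sub_distrib]
        congr 1
        · rw [hu, Finset.sum_mul]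
          exact Finset.sum_congr rfl fun a _ => by ring
        · rw [show ∑ a ∈ l.support, l a * ((a : T) * ((rho (g' x) : ↥R) : T))
              = (∑ a ∈ l.support, l a * (a : T)) * ((rho (g' x) : ↥R) : T) by
            rw [Finset.sum_mul]; exact Finset.sum_congr rfl fun a _ => by ring]
          rw [hsum, one_mul]
      rw [heq]
      exact Ideal.sum_mem _ fun a ha => C.mul_mem_left _ (hterm a ha)
    have hmemR : ∀ x : I, u * ((x : ↥R) : T) ∈ R := by
      intro x
      have h := hCR (hclaim x)
      have e3 : u * ((x : ↥R) : T)
          = (u * ((x : ↥R) : T) - ((rho (g' x) : ↥R) : T)) + ((rho (g' x) : ↥R) : T) := by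
        ring
      rw [e3]
      exact R.add_mem h (rho (g' x)).2
    set f : I →ₗ[↥R] ↥R :=
      { toFun := fun x => ⟨u * ((x : ↥R) : T), hmemR x⟩
        map_add' := by
          intro x y
          apply Subtype.ext
          push_cast
          ring
        map_smul' := by
          intro r x
          apply Subtype.ext
          simp only [RingHom.id_apply, SetLike.val_smul, smul_eq_mul]
          push_cast
          ring } with hf
    refine ⟨f, ?_⟩
    refine LinearMap.ext fun xq => ?_
    obtain ⟨x, rfl⟩ := Submodule.Quotient.mk_surjective _ xq
    rw [hPhi]
    have hgx : g (Submodule.Quotient.mk x) = g' x := rfl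
    rw [hgx, ← hrho (g' x), Submodule.Quotient.eq]
    refine (hmemJ _).mpr ?_
    have : ((f x - rho (g' x) : ↥R) : T)
        = u * ((x : ↥R) : T) - ((rho (g' x) : ↥R) : T) := by
      push_cast
      rfl
    rw [this]
    exact hclaim x
  exact ⟨(Submodule.quotEquivOfEq _ _ hker.symm).trans
    (Phi.quotKerEquivOfSurjective hsurj)⟩
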